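/- Let H_1, H_2 ⊆ E^d = {±e_1,...,±e_d} form a balanced-non-canceling pair, i.e., |H_1| = |H_2| and s_1 + s_2 ≠ 0 for all s_1 ∈ H_1, s_2 ∈ H_2. Pair the smallest element s_1 of H_1 (in lexicographic order) with the largest element s_2 of H_2, add the two directed edges (−s_1, −s_1 + s_2) and (−s_1 + s_2, s_2) on vertex set {−1,0,+1}^d, remove s_1 from H_1 and s_2 from H_2, and repeat until H_1 is empty. Then in the resulting directed graph G[H_1,H_2] on {−1,0,+1}^d: every vertex has in-degree ≤ 1 and out-degree ≤ 1; a vertex u has in-degree 0 and out-degree 1 iff u = −e for some e ∈ H_1; and u has in-degree 1 and out-degree 0 iff u = e for some e ∈ H_2. -/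
import Mathlib


/-- Lexicographic (strict) order on vectors in `ℤ^d`. -/
def lexLt {d : ℕ} (x y : Fin d → ℤ) : Prop :=
  ∃ i : Fin d, x i < y i ∧ ∀ j : Fin d, j < i → x j = y j

/-- `x` is a signed standard unit vector `±e_i`. -/
def isSignedUnit {d : ℕ} (x : Fin d → ℤ) : Prop :=
  ∃ (i : Fin d) (s : ℤ), (s = 1 ∨ s = -1) ∧ x = fun j => if j = i then s else 0

/-- The edge relation of `G[H₁,H₂]`: with `a` the increasing enumeration of
`H₁` and `b` the decreasing enumeration of `H₂` (so step `t` pairs the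
`t`-smallest of `H₁` with the `t`-largest of `H₂`), the edges are
`(-a t, -a t + b t)` and `(-a t + b t, b t)`. -/
def edgeRel {d k : ℕ} (a b : Fin k → (Fin d → ℤ)) (u v : Fin d → ℤ) : Prop :=
  ∃ t : Fin k, (u = -(a t) ∧ v = -(a t) + b t) ∨ (u = -(a t) + b t ∧ v = b t)

lemma lexLt_asymm {d : ℕ} {x y : Fin d → ℤ} (h1 : lexLt x y) (h2 : lexLt y x) : False := by
  obtain ⟨i, hi, hji⟩ := h1
  obtain ⟨i', hi', hji'⟩ := h2
  rcases lt_trichotomy i i' with h | h | h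
  · have := hji' i h; omega
  · subst h; omega
  · have := hji i' h; omega

lemma lexLt_add {d : ℕ} {x y : Fin d → ℤ} (c : Fin d → ℤ) (h : lexLt x y) :
    lexLt (x + c) (y + c) := by
  obtain ⟨i, hi, hj⟩ := h
  exact ⟨i, by simp only [Pi.add_apply]; omega,
    fun j hji => by simp only [Pi.add_apply, hj j hji]⟩

lemma unit_add_ne {d : ℕ} {x y z : Fin d → ℤ} (hx : isSignedUnit x)
    (hy : isSignedUnit y) (hz : isSignedUnit z) : x + z ≠ y := by
  obtain ⟨i, s, hs, rfl⟩ := hx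
  obtain ⟨j, u, hu, rfl⟩ := hy
  obtain ⟨l, v, hv, rfl⟩ := hz
  intro h
  have hi := congrFun h i
  have hj := congrFun h j
  have hl := congrFun h l
  simp only [Pi.add_apply] at hi hj hl
  by_cases hij : i = j <;> by_cases hil : i = l <;> by_cases hjl : j = l <;>
    simp_all <;> omega

/-- Properties of the graph `G[H₁,H₂]` built from a balanced-non-canceling pair:
all in/out-degrees are at most 1; sources are exactly the vertices `-e`, `e ∈ H₁`;
sinks are exactly the vertices `e`, `e ∈ H₂`. -/
theorem stmt16 (d k : ℕ) (hd : 1 ≤ d) (H1 H2 : Finset (Fin d → ℤ))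
    (hu1 : ∀ x ∈ H1, isSignedUnit x) (hu2 : ∀ x ∈ H2, isSignedUnit x)
    (hc1 : H1.card = k) (hc2 : H2.card = k)
    (hnc : ∀ s1 ∈ H1, ∀ s2 ∈ H2, s1 + s2 ≠ 0)
    (a b : Fin k → (Fin d → ℤ))
    (ha1 : ∀ t, a t ∈ H1) (ha2 : Function.Injective a)
    (hamono : ∀ t1 t2 : Fin k, t1 < t2 → lexLt (a t1) (a t2))
    (hb1 : ∀ t, b t ∈ H2) (hb2 : Function.Injective b)
    (hbmono : ∀ t1 t2 : Fin k, t1 < t2 → lexLt (b t2) (b t1)) :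
    (∀ u v1 v2, edgeRel a b u v1 → edgeRel a b u v2 → v1 = v2) ∧
    (∀ u w1 w2, edgeRel a b w1 u → edgeRel a b w2 u → w1 = w2) ∧
    (∀ u : Fin d → ℤ,
      ((∃ v, edgeRel a b u v) ∧ ¬(∃ w, edgeRel a b w u)) ↔ ∃ e ∈ H1, u = -e) ∧
    (∀ u : Fin d → ℤ,
      ((∃ w, edgeRel a b w u) ∧ ¬(∃ v, edgeRel a b u v)) ↔ ∃ e ∈ H2, u = e) := by
  -- middle vertices are pairwise distinct
  have hM : ∀ t1 t2 : Fin k, -(a t1) + b t1 = -(a t2) + b t2 → t1 = t2 := by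
    intro t1 t2 h
    by_contra hne
    rcases lt_or_gt_of_ne hne with hlt | hlt
    · have h5 := lexLt_add (-(a t2) + b t2) (hamono t1 t2 hlt)
      have e1 : a t1 + (-(a t2) + b t2) = b t1 := by linear_combination -h
      have e2 : a t2 + (-(a t2) + b t2) = b t2 := by ring
      rw [e1, e2] at h5
      exact lexLt_asymm h5 (hbmono t1 t2 hlt)
    · have h5 := lexLt_add (-(a t1) + b t1) (hamono t2 t1 hlt)
      have e1 : a t2 + (-(a t1) + b t1) = b t2 := by linear_combination h
      have e2 : a t1 + (-(a t1) + b t1) = b t1 := by ring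
      rw [e1, e2] at h5
      exact lexLt_asymm h5 (hbmono t2 t1 hlt)
  -- a source-vertex is never a middle vertex
  have hAM : ∀ t1 t2 : Fin k, -(a t1) ≠ -(a t2) + b t2 := by
    intro t1 t2 h
    exact unit_add_ne (hu1 _ (ha1 t1)) (hu1 _ (ha1 t2)) (hu2 _ (hb1 t2))
      (show a t1 + b t2 = a t2 by linear_combination -h)
  -- a middle vertex is never a sink-vertex
  have hMB : ∀ t1 t2 : Fin k, -(a t1) + b t1 ≠ b t2 := by
    intro t1 t2 h
    exact unit_add_ne (hu1 _ (ha1 t1)) (hu2 _ (hb1 t1)) (hu2 _ (hb1 t2))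
      (show a t1 + b t2 = b t1 by linear_combination -h)
  -- a source-vertex is never a sink-vertex
  have hAB : ∀ t1 t2 : Fin k, -(a t1) ≠ b t2 := by
    intro t1 t2 h
    exact hnc _ (ha1 t1) _ (hb1 t2) (show a t1 + b t2 = 0 by linear_combination -h)
  -- surjectivity of the enumerations
  have hsa : ∀ e ∈ H1, ∃ t, a t = e := by
    intro e he
    have himg : Finset.image a Finset.univ = H1 := by
      apply Finset.eq_of_subset_of_card_le
      · intro x hx
        simp only [Finset.mem_image, Finset.mem_univ, true_and] at hx
        obtain ⟨t, rfl⟩ := hx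
        exact ha1 t
      · rw [hc1, Finset.card_image_of_injective _ ha2, Finset.card_univ, Fintype.card_fin]
    rw [← himg] at he
    simpa using he
  have hsb : ∀ e ∈ H2, ∃ t, b t = e := by
    intro e he
    have himg : Finset.image b Finset.univ = H2 := by
      apply Finset.eq_of_subset_of_card_le
      · intro x hx
        simp only [Finset.mem_image, Finset.mem_univ, true_and] at hx
        obtain ⟨t, rfl⟩ := hx
        exact hb1 t
      · rw [hc2, Finset.card_image_of_injective _ hb2, Finset.card_univ, Fintype.card_fin]
    rw [← himg] at he
    simpa using he
  refine ⟨?_, ?_, ?_, ?_⟩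
  · -- out-degree ≤ 1
    rintro u v1 v2 ⟨t1, h1⟩ ⟨t2, h2⟩
    rcases h1 with ⟨h1u, h1v⟩ | ⟨h1u, h1v⟩ <;> rcases h2 with ⟨h2u, h2v⟩ | ⟨h2u, h2v⟩
    · have ht : t1 = t2 := ha2 (neg_injective (h1u.symm.trans h2u))
      subst ht; rw [h1v, h2v]
    · exact absurd (h1u.symm.trans h2u) (hAM t1 t2)
    · exact absurd (h2u.symm.trans h1u) (hAM t2 t1)
    · have ht : t1 = t2 := hM t1 t2 (h1u.symm.trans h2u)
      subst ht; rw [h1v, h2v]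
  · -- in-degree ≤ 1
    rintro u w1 w2 ⟨t1, h1⟩ ⟨t2, h2⟩
    rcases h1 with ⟨h1w, h1u⟩ | ⟨h1w, h1u⟩ <;> rcases h2 with ⟨h2w, h2u⟩ | ⟨h2w, h2u⟩
    · have ht : t1 = t2 := hM t1 t2 (h1u.symm.trans h2u)
      subst ht; rw [h1w, h2w]
    · exact absurd (h1u.symm.trans h2u) (hMB t1 t2)
    · exact absurd (h2u.symm.trans h1u) (hMB t2 t1)
    · have ht : t1 = t2 := hb2 (h1u.symm.trans h2u)
      subst ht; rw [h1w, h2w]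
  · -- sources
    intro u
    constructor
    · rintro ⟨⟨v, t, h⟩, hni⟩
      rcases h with ⟨hu, hv⟩ | ⟨hu, hv⟩
      · exact ⟨a t, ha1 t, hu⟩
      · exact absurd ⟨-(a t), t, Or.inl ⟨rfl, hu⟩⟩ hni
    · rintro ⟨e, he, rfl⟩
      obtain ⟨t, rfl⟩ := hsa e he
      refine ⟨⟨-(a t) + b t, t, Or.inl ⟨rfl, rfl⟩⟩, ?_⟩
      rintro ⟨w, t', ⟨hw, hu⟩ | ⟨hw, hu⟩⟩
      · exact hAM t t' hu
      · exact hAB t t' hu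
  · -- sinks
    intro u
    constructor
    · rintro ⟨⟨w, t, h⟩, hno⟩
      rcases h with ⟨hw, hu⟩ | ⟨hw, hu⟩
      · exact absurd ⟨b t, t, Or.inr ⟨hu, rfl⟩⟩ hno
      · exact ⟨b t, hb1 t, hu⟩
    · rintro ⟨e, he, heq⟩
      obtain ⟨t, rfl⟩ := hsb e he
      subst heq
      refine ⟨⟨-(a t) + b t, t, Or.inr ⟨rfl, rfl⟩⟩, ?_⟩
      rintro ⟨v, t', ⟨hu, hv⟩ | ⟨hu, hv⟩⟩
      · exact hAB t' t hu.symm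
      · exact hMB t' t hu.symm
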